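/- Let p ∈ [2,∞) and q ∈ (1,2] with 1/p + 1/q = 1, and define for ξ > 0 the function t(ξ) = (√(ξ+p+q−1) + √(p+q)) · ( ξ/(√(ξ+p+q−1) + √(p+q−1))² )^{√(p+q−1)/√(p+q)} · ( (√(ξ+p+q−1) + √(q−1))/(ξ+p) )^{1/p} · ( (√(ξ+p+q−1) + √(p−1))/(ξ+q) )^{1/q}. Then t is differentiable and positive on (0,∞), and for all ξ > 0, t'(ξ)/t(ξ) = (3ξ + 2(p+q−1)) / ( 2ξ·√(ξ+p+q−1)·(√(p+q) + ξ·√(ξ+p+q−1)) ). -/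

import Mathlib

/-- The function `t(ξ)` of Theorem 3.4 of the paper (case `c = −2(p+q)`, `s = 1`). -/
noncomputable def tfun (p q ξ : ℝ) : ℝ :=
  (Real.sqrt (ξ + p + q - 1) + Real.sqrt (p + q)) *
    (ξ / (Real.sqrt (ξ + p + q - 1) + Real.sqrt (p + q - 1)) ^ 2) ^
      (Real.sqrt (p + q - 1) / Real.sqrt (p + q)) *
    ((Real.sqrt (ξ + p + q - 1) + Real.sqrt (q - 1)) / (ξ + p)) ^ (1 / p) *
    ((Real.sqrt (ξ + p + q - 1) + Real.sqrt (p - 1)) / (ξ + q)) ^ (1 / q)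

lemma aux2 (u B A ξ : ℝ) (hu : 0 < u) (hB : 0 < B) (hA : A ≠ 0) (hξ : 0 < ξ)
    (hξ' : ξ = u^2 - B^2) :
    (B/A) * ((1*(u+B)^2 - ξ*(2*(u+B)*(1/(2*u))))/((u+B)^2)^2) / (ξ/(u+B)^2)
      = B^2/(A*ξ*u) := by
  subst hξ'
  have h0 : u^2 - B^2 ≠ 0 := hξ.ne'
  have h1 : u + B ≠ 0 := by positivity
  field_simp
  ring

lemma aux3 (u Q y pp : ℝ) (hu : 0 < u) (hQ : 0 < Q) (hpp : pp ≠ 0)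
    (hy : y = u^2 - Q^2) (hy0 : y ≠ 0) :
    (1/pp) * (((1/(2*u))*y - (u+Q)*1)/y^2) / ((u+Q)/y) = -((u+Q)/(2*pp*u*y)) := by
  subst hy
  have h1 : u + Q ≠ 0 := by positivity
  field_simp
  ring

lemma aux_comb (u A P Q : ℝ) (hu : 0 < u) (hA : 0 < A)
    (hP1 : P*u - 1 ≠ 0) (hQ1 : Q*u - 1 ≠ 0) (hA' : A = P + Q) (hPQ : P * Q = 1) :
    -(1/(2*A*u*(P*u-1))) + -(1/(2*A*u*(Q*u-1)))
      = -((u*A-2)/(2*A*u*(u^2-A*u+1))) := by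
  have hfac : u^2 - A*u + 1 = (P*u-1)*(Q*u-1) := by
    subst hA'; linear_combination (-u^2) * hPQ
  rw [hfac]
  subst hA'
  have hu0 : u ≠ 0 := hu.ne'
  have hA0 : P + Q ≠ 0 := hA.ne'
  field_simp
  ring

lemma aux_sum2 (u A ξ : ℝ) (hu : 0 < u) (hA : 0 < A) (hξ : 0 < ξ)
    (hfac : u^2 - A*u + 1 ≠ 0) (hξ' : ξ = u^2 - A^2 + 1) :
    1/(2*u*(u+A)) + (A^2-1)/(A*ξ*u) + -((u*A-2)/(2*A*u*(u^2-A*u+1)))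
      = (3*ξ + 2*(A^2-1))/(2*ξ*u*(A+ξ*u)) := by
  have huA : u + A ≠ 0 := by positivity
  have hden : A + ξ*u ≠ 0 := (add_pos hA (mul_pos hξ hu)).ne'
  subst hξ'
  have hξ2 : u^2 - A^2 + 1 ≠ 0 := hξ.ne'
  have hden2 : A + (u^2 - A^2 + 1)*u ≠ 0 := hden
  have hfac2 : u * (u - A) + 1 ≠ 0 := by
    rw [show u * (u - A) + 1 = u^2 - A*u + 1 by ring]; exact hfac
  field_simp
  ring


set_option maxHeartbeats 1000000 in
/-- `t` is differentiable and positive on `(0,∞)`, with logarithmic derivative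
`t'/t = (3ξ + 2(p+q−1)) / (2ξ √(ξ+p+q−1) (√(p+q) + ξ√(ξ+p+q−1)))`. -/
theorem tfun_logderiv (p q : ℝ) (hp : 2 ≤ p) (hq₁ : 1 < q) (hq₂ : q ≤ 2)
    (hpq : 1 / p + 1 / q = 1) :
    ∀ ξ : ℝ, 0 < ξ →
      DifferentiableAt ℝ (tfun p q) ξ ∧ 0 < tfun p q ξ ∧
      deriv (tfun p q) ξ / tfun p q ξ =
        (3 * ξ + 2 * (p + q - 1)) /
          (2 * ξ * Real.sqrt (ξ + p + q - 1) *
            (Real.sqrt (p + q) + ξ * Real.sqrt (ξ + p + q - 1))) := by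
  intro ξ hξ
  have hp0 : (0:ℝ) < p := by linarith
  have hq0 : (0:ℝ) < q := by linarith
  have hpqmul : p * q = p + q := by
    have hp' : p ≠ 0 := hp0.ne'
    have hq' : q ≠ 0 := hq0.ne'
    field_simp at hpq; linarith
  have hbpos : (0:ℝ) < p + q - 1 := by linarith
  have hupos : (0:ℝ) < ξ + p + q - 1 := by linarith
  set u := Real.sqrt (ξ + p + q - 1) with hu_def
  set A := Real.sqrt (p + q) with hA_def
  set B := Real.sqrt (p + q - 1) with hB_def
  set P := Real.sqrt (p - 1) with hP_def
  set Q := Real.sqrt (q - 1) with hQ_def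
  have hu : 0 < u := Real.sqrt_pos.mpr hupos
  have hA : 0 < A := Real.sqrt_pos.mpr (by linarith)
  have hB : 0 < B := Real.sqrt_pos.mpr hbpos
  have hP : 0 < P := Real.sqrt_pos.mpr (by linarith)
  have hQpos : 0 < Q := Real.sqrt_pos.mpr (by linarith)
  have hu2 : u^2 = ξ + p + q - 1 := Real.sq_sqrt hupos.le
  have hA2 : A^2 = p + q := Real.sq_sqrt (by linarith)
  have hB2 : B^2 = p + q - 1 := Real.sq_sqrt hbpos.le
  have hP2 : P^2 = p - 1 := Real.sq_sqrt (by linarith)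
  have hQ2 : Q^2 = q - 1 := Real.sq_sqrt (by linarith)
  have hPQ : P * Q = 1 := by
    rw [hP_def, hQ_def, ← Real.sqrt_mul (by linarith : (0:ℝ) ≤ p - 1),
      show (p-1)*(q-1) = 1 by nlinarith]
    exact Real.sqrt_one
  have hAPQ : A = P + Q := by
    rw [hA_def, show p + q = (P+Q)^2 by nlinarith [hP2, hQ2, hPQ],
      Real.sqrt_sq (by positivity)]
  have hQu : Q < u := by
    apply lt_of_pow_lt_pow_left₀ 2 hu.le
    nlinarith [hQ2, hu2]
  have hPu : P < u := by
    apply lt_of_pow_lt_pow_left₀ 2 hu.le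
    nlinarith [hP2, hu2]
  have hPu1 : 0 < P*u - 1 := by nlinarith [mul_pos hP (sub_pos.mpr hQu)]
  have hQu1 : 0 < Q*u - 1 := by nlinarith [mul_pos hQpos (sub_pos.mpr hPu)]
  -- derivative of the inner sqrt
  have hdbase : HasDerivAt (fun x : ℝ => x + p + q - 1) 1 ξ := by
    simpa using (((hasDerivAt_id ξ).add_const p).add_const q).sub_const 1
  have hw : HasDerivAt (fun x : ℝ => Real.sqrt (x + p + q - 1)) (1/(2*u)) ξ := by
    have h := (Real.hasDerivAt_sqrt hupos.ne').comp ξ hdbase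
    simpa [Function.comp_def, ← hu_def] using h
  -- factor 1
  have h1 : HasDerivAt (fun x : ℝ => Real.sqrt (x+p+q-1) + A) (1/(2*u)) ξ :=
    hw.add_const A
  -- factor 2
  have hden2' : HasDerivAt (fun x : ℝ => (Real.sqrt (x+p+q-1) + B)^2)
      (2*(u+B)*(1/(2*u))) ξ := by
    have h := (hw.add_const B).pow 2
    beta_reduce at h
    rw [← hu_def] at h
    norm_num at h
    exact h.congr_deriv (by ring)
  have hg2 : HasDerivAt (fun x : ℝ => x / (Real.sqrt (x+p+q-1) + B)^2)
      ((1*(u+B)^2 - ξ*(2*(u+B)*(1/(2*u))))/((u+B)^2)^2) ξ :=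
    (hasDerivAt_id' ξ).div hden2' (by show ((u+B)^2 : ℝ) ≠ 0; positivity)
  have hg2pos : 0 < ξ / (u+B)^2 := by positivity
  have h2 : HasDerivAt (fun x : ℝ => (x / (Real.sqrt (x+p+q-1) + B)^2) ^ (B/A))
      ((1*(u+B)^2 - ξ*(2*(u+B)*(1/(2*u))))/((u+B)^2)^2 * (B/A) *
        (ξ/(u+B)^2) ^ (B/A - 1)) ξ :=
    hg2.rpow_const (Or.inl hg2pos.ne')
  -- factor 3
  have hg3 : HasDerivAt (fun x : ℝ => (Real.sqrt (x+p+q-1) + Q)/(x+p))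
      (((1/(2*u))*(ξ+p) - (u+Q)*1)/(ξ+p)^2) ξ :=
    (hw.add_const Q).div ((hasDerivAt_id ξ).add_const p)
      (by show (ξ+p : ℝ) ≠ 0; positivity)
  have hg3pos : 0 < (u+Q)/(ξ+p) := by positivity
  have h3 : HasDerivAt (fun x : ℝ => ((Real.sqrt (x+p+q-1) + Q)/(x+p)) ^ (1/p))
      (((1/(2*u))*(ξ+p) - (u+Q)*1)/(ξ+p)^2 * (1/p) * ((u+Q)/(ξ+p)) ^ (1/p - 1)) ξ :=
    hg3.rpow_const (Or.inl hg3pos.ne')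
  -- factor 4
  have hg4 : HasDerivAt (fun x : ℝ => (Real.sqrt (x+p+q-1) + P)/(x+q))
      (((1/(2*u))*(ξ+q) - (u+P)*1)/(ξ+q)^2) ξ :=
    (hw.add_const P).div ((hasDerivAt_id ξ).add_const q)
      (by show (ξ+q : ℝ) ≠ 0; positivity)
  have hg4pos : 0 < (u+P)/(ξ+q) := by positivity
  have h4 : HasDerivAt (fun x : ℝ => ((Real.sqrt (x+p+q-1) + P)/(x+q)) ^ (1/q))
      (((1/(2*u))*(ξ+q) - (u+P)*1)/(ξ+q)^2 * (1/q) * ((u+P)/(ξ+q)) ^ (1/q - 1)) ξ :=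
    hg4.rpow_const (Or.inl hg4pos.ne')
  -- nice forms of the derivatives
  have e1 : (1:ℝ)/(2*u) = (u+A) * (1/(2*u*(u+A))) := by
    have h : u + A ≠ 0 := by positivity
    field_simp
  have e2 : (1*(u+B)^2 - ξ*(2*(u+B)*(1/(2*u))))/((u+B)^2)^2 * (B/A) *
        (ξ/(u+B)^2) ^ (B/A - 1)
      = (ξ/(u+B)^2) ^ (B/A) * (B^2/(A*ξ*u)) := by
    rw [Real.rpow_sub_one hg2pos.ne',
      ← aux2 u B A ξ hu hB hA.ne' hξ (by linarith [hu2, hB2])]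
    generalize (ξ/(u+B)^2) ^ (B/A) = X
    have hg : (ξ/(u+B)^2) ≠ 0 := hg2pos.ne'
    field_simp
  have e3 : ((1/(2*u))*(ξ+p) - (u+Q)*1)/(ξ+p)^2 * (1/p) * ((u+Q)/(ξ+p)) ^ (1/p - 1)
      = ((u+Q)/(ξ+p)) ^ (1/p) * (-((u+Q)/(2*p*u*(ξ+p)))) := by
    rw [Real.rpow_sub_one hg3pos.ne',
      ← aux3 u Q (ξ+p) p hu hQpos hp0.ne' (by linarith [hu2, hQ2]) (by positivity)]
    generalize ((u+Q)/(ξ+p)) ^ (1/p) = X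
    have hg : (u+Q)/(ξ+p) ≠ 0 := hg3pos.ne'
    field_simp
  have e4 : ((1/(2*u))*(ξ+q) - (u+P)*1)/(ξ+q)^2 * (1/q) * ((u+P)/(ξ+q)) ^ (1/q - 1)
      = ((u+P)/(ξ+q)) ^ (1/q) * (-((u+P)/(2*q*u*(ξ+q)))) := by
    rw [Real.rpow_sub_one hg4pos.ne',
      ← aux3 u P (ξ+q) q hu hP hq0.ne' (by linarith [hu2, hP2]) (by positivity)]
    generalize ((u+P)/(ξ+q)) ^ (1/q) = X
    have hg : (u+P)/(ξ+q) ≠ 0 := hg4pos.ne'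
    field_simp
  rw [e1] at h1
  rw [e2] at h2
  rw [e3] at h3
  rw [e4] at h4
  -- the product
  have hprod := ((h1.mul h2).mul h3).mul h4
  beta_reduce at hprod
  rw [← hu_def] at hprod
  set F2 := (ξ/(u+B)^2) ^ (B/A) with hF2
  set F3 := ((u+Q)/(ξ+p)) ^ (1/p) with hF3
  set F4 := ((u+P)/(ξ+q)) ^ (1/q) with hF4
  have hF2pos : 0 < F2 := Real.rpow_pos_of_pos hg2pos _
  have hF3pos : 0 < F3 := Real.rpow_pos_of_pos hg3pos _
  have hF4pos : 0 < F4 := Real.rpow_pos_of_pos hg4pos _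
  have hTpos : 0 < (u+A) * F2 * F3 * F4 := by positivity
  have hval : tfun p q ξ = (u+A) * F2 * F3 * F4 := rfl
  have hS :
      (u+A) * (1/(2*u*(u+A))) * F2 * F3 * F4 +
        (u+A) * (F2 * (B^2/(A*ξ*u))) * F3 * F4 +
        (u+A) * F2 * (F3 * (-((u+Q)/(2*p*u*(ξ+p))))) * F4 +
        (u+A) * F2 * F3 * (F4 * (-((u+P)/(2*q*u*(ξ+q))))) =
      ((u+A) * F2 * F3 * F4) *
        (1/(2*u*(u+A)) + B^2/(A*ξ*u) + -((u+Q)/(2*p*u*(ξ+p))) + -((u+P)/(2*q*u*(ξ+q)))) := by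
    ring
  have hD : HasDerivAt (tfun p q)
      (((u+A) * F2 * F3 * F4) *
        (1/(2*u*(u+A)) + B^2/(A*ξ*u) + -((u+Q)/(2*p*u*(ξ+p))) + -((u+P)/(2*q*u*(ξ+q))))) ξ := by
    rw [← hS]
    refine hprod.congr_deriv ?_
    simp only [Pi.mul_apply]
    rw [← hu_def, ← hF2, ← hF3]
    ring
  refine ⟨hD.differentiableAt, ?_, ?_⟩
  · rw [hval]; exact hTpos
  · rw [hD.deriv, hval, mul_div_cancel_left₀ _ hTpos.ne']
    -- now a purely algebraic identity
    have hs3 : -((u+Q)/(2*p*u*(ξ+p))) = -(1/(2*A*u*(P*u-1))) := by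
      have hxp : ξ + p = (u - Q)*(u + Q) := by linear_combination -hu2 + hQ2
      have hpPA : p = P*A := by rw [hAPQ]; linear_combination -hP2 - hPQ
      have hden : 2*p*u*(ξ+p) = 2*A*u*(P*u-1)*(u+Q) := by
        rw [hxp, hpPA]; linear_combination (-(2*A*u*(u+Q))) * hPQ
      rw [hden, neg_inj, div_eq_div_iff (by positivity) (by positivity)]
      ring
    have hs4 : -((u+P)/(2*q*u*(ξ+q))) = -(1/(2*A*u*(Q*u-1))) := by
      have hxq : ξ + q = (u - P)*(u + P) := by linear_combination -hu2 + hP2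
      have hqQA : q = Q*A := by rw [hAPQ]; linear_combination -hQ2 - hPQ
      have hden : 2*q*u*(ξ+q) = 2*A*u*(Q*u-1)*(u+P) := by
        rw [hxq, hqQA]; linear_combination (-(2*A*u*(u+P))) * hPQ
      rw [hden, neg_inj, div_eq_div_iff (by positivity) (by positivity)]
      ring
    have hBA : B^2 = A^2 - 1 := by rw [hB2, hA2]
    rw [hs3, hs4, hBA]
    have hfacne : u^2 - A*u + 1 ≠ 0 := by
      have : u^2 - A*u + 1 = (P*u-1)*(Q*u-1) := by
        rw [hAPQ]; linear_combination (-u^2) * hPQ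
      rw [this]; positivity
    have hstep : 1/(2*u*(u+A)) + (A^2-1)/(A*ξ*u) +
        (-(1/(2*A*u*(P*u-1))) + -(1/(2*A*u*(Q*u-1)))) =
        (3*ξ + 2*(A^2-1))/(2*ξ*u*(A+ξ*u)) := by
      rw [aux_comb u A P Q hu hA hPu1.ne' hQu1.ne' hAPQ hPQ]
      exact aux_sum2 u A ξ hu hA hξ hfacne (by linear_combination -hu2 + hA2)
    rw [show (3*ξ + 2*(p+q-1)) = 3*ξ + 2*(A^2-1) by rw [hA2]]
    rw [← hstep]
    ring
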